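/- arXiv:2104.07263 — 3 statements merged into one kernel-verified Lean document; each statement's English description precedes it below -/
import Mathlib

section
/- Let (Ω, F, P) be a probability space, N₀, P₀ ∈ ℕ, and set N_{ℓ₁} = N₀·2^{ℓ₁}, P_{ℓ₂} = P₀·2^{ℓ₂} for multi-indices ℓ = (ℓ₁,ℓ₂) ∈ ℕ₀². Suppose {Δ_{ℓ,m} : ℓ ∈ ℕ₀², m ∈ ℕ} is a family of mutually independent real-valued random variables such that for each ℓ the Δ_{ℓ,m}, m ∈ ℕ, are identically distributed, and there exist constants c₁, c₂ > 0 with |E[Δ_{ℓ,1}]| ≤ c₁ N_{ℓ₁}^{-1} P_{ℓ₂}^{-1} and Var[Δ_{ℓ,1}] ≤ c₂ N_{ℓ₁}^{-2} P_{ℓ₂}^{-2} for all ℓ ∈ ℕ₀². Suppose A ∈ ℝ satisfies A = Σ_{ℓ ∈ ℕ₀²} E[Δ_{ℓ,1}] (the double series converging absolutely). Fix L₀ ∈ ℕ₀ and for ε ∈ (0,1) set L(ε) = max(⌈log₂(ε⁻¹) + log₂ log₂(ε⁻¹)⌉ − L₀, 1), index set I(ε) = {ℓ ∈ ℕ₀²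 : ℓ₁ + ℓ₂ ≤ L(ε)}, and M_ℓ(ε) = ⌈ε⁻² N_{ℓ₁}^{-3/2} P_{ℓ₂}^{-3/2}⌉. Define the multi-index estimator μ^{MI}(ε) = Σ_{ℓ ∈ I(ε)} M_ℓ(ε)⁻¹ Σ_{m=1}^{M_ℓ(ε)} Δ_{ℓ,m}. Then there exist constants C > 0 and ε₀ ∈ (0,1) such that for all ε ∈ (0, ε₀], E[(μ^{MI}(ε) − A)²] ≤ C ε². -/
open MeasureTheory ProbabilityTheory

/-- Resolution in the timestep direction: `N_{ℓ₁} = N₀ · 2^{ℓ₁}`. -/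
noncomputable def resN (N₀ : ℕ) (ℓ₁ : ℕ) : ℝ := (N₀ : ℝ) * 2 ^ ℓ₁

/-- Resolution in the ensemble-size direction: `P_{ℓ₂} = P₀ · 2^{ℓ₂}`. -/
noncomputable def resP (P₀ : ℕ) (ℓ₂ : ℕ) : ℝ := (P₀ : ℝ) * 2 ^ ℓ₂

/-- Maximal level `L(ε) = max(⌈log₂ ε⁻¹ + log₂ log₂ ε⁻¹⌉ − L₀, 1)`. -/
noncomputable def levelL (L₀ : ℕ) (ε : ℝ) : ℕ :=
  (max (⌈Real.logb 2 ε⁻¹ + Real.logb 2 (Real.logb 2 ε⁻¹)⌉ - (L₀ : ℤ)) 1).toNat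

/-- Triangular multi-index set `{ℓ ∈ ℕ₀² : ℓ₁ + ℓ₂ ≤ L}` as a finite set. -/
def idxSet (L : ℕ) : Finset (ℕ × ℕ) :=
  (Finset.range (L + 1) ×ˢ Finset.range (L + 1)).filter fun ℓ => ℓ.1 + ℓ.2 ≤ L

/-- Number of samples `M_ℓ(ε) = ⌈ε⁻² N_{ℓ₁}^{-3/2} P_{ℓ₂}^{-3/2}⌉`. -/
noncomputable def numSamples (N₀ P₀ : ℕ) (ε : ℝ) (ℓ : ℕ × ℕ) : ℕ :=
  ⌈ε⁻¹ ^ 2 * resN N₀ ℓ.1 ^ (-(3 : ℝ) / 2) * resP P₀ ℓ.2 ^ (-(3 : ℝ) / 2)⌉₊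

/-- The multi-index estimator `μ^{MI}(ε) = Σ_{ℓ ∈ I(ε)} M_ℓ(ε)⁻¹ Σ_{m=1}^{M_ℓ(ε)} Δ_{ℓ,m}`. -/
noncomputable def MIestimator {Ω : Type*} [MeasurableSpace Ω] (N₀ P₀ L₀ : ℕ) (ε : ℝ)
    (Δ : (ℕ × ℕ) × ℕ → Ω → ℝ) (ω : Ω) : ℝ :=
  ∑ ℓ ∈ idxSet (levelL L₀ ε),
    (numSamples N₀ P₀ ε ℓ : ℝ)⁻¹ * ∑ m ∈ Finset.Icc 1 (numSamples N₀ P₀ ε ℓ), Δ (ℓ, m) ω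

lemma mem_idxSet {L : ℕ} {ℓ : ℕ × ℕ} : ℓ ∈ idxSet L ↔ ℓ.1 + ℓ.2 ≤ L := by
  simp only [idxSet, Finset.mem_filter, Finset.mem_product, Finset.mem_range]
  omega

lemma sum_idxSet_geom (L : ℕ) :
    ∑ ℓ ∈ idxSet L, ((2:ℝ)⁻¹) ^ ℓ.1 * ((2:ℝ)⁻¹) ^ ℓ.2 = 4 - ((L:ℝ) + 3) * ((2:ℝ)⁻¹) ^ L := by
  induction L with
  | zero =>
    have : idxSet 0 = {(0,0)} := by decide
    rw [this]; norm_num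
  | succ L ih =>
    have hsplit : idxSet (L+1) = idxSet L ∪ Finset.HasAntidiagonal.antidiagonal (L+1) := by
      ext ℓ
      simp only [mem_idxSet, Finset.mem_union, Finset.HasAntidiagonal.mem_antidiagonal]
      omega
    have hdisj : Disjoint (idxSet L) (Finset.HasAntidiagonal.antidiagonal (L+1)) := by
      rw [Finset.disjoint_left]
      intro ℓ h1 h2
      rw [mem_idxSet] at h1
      rw [Finset.HasAntidiagonal.mem_antidiagonal] at h2
      omega
    have hanti : ∀ ℓ ∈ Finset.HasAntidiagonal.antidiagonal (L+1),
        ((2:ℝ)⁻¹) ^ ℓ.1 * ((2:ℝ)⁻¹) ^ ℓ.2 = ((2:ℝ)⁻¹) ^ (L+1) := fun ℓ hℓ => by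
      rw [← pow_add, Finset.HasAntidiagonal.mem_antidiagonal.mp hℓ]
    rw [hsplit, Finset.sum_union hdisj, ih, Finset.sum_congr rfl hanti, Finset.sum_const,
      Finset.Nat.card_antidiagonal, nsmul_eq_mul, pow_succ]
    push_cast
    ring

lemma summable_prod_geom {r : ℝ} (h0 : 0 ≤ r) (h1 : r < 1) :
    Summable (fun p : ℕ × ℕ => r ^ p.1 * r ^ p.2) :=
  Summable.mul_of_nonneg (summable_geometric_of_lt_one h0 h1)
    (summable_geometric_of_lt_one h0 h1) (fun _ => pow_nonneg h0 _) (fun _ => pow_nonneg h0 _)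

lemma tsum_prod_geom {r : ℝ} (h0 : 0 ≤ r) (h1 : r < 1) :
    ∑' p : ℕ × ℕ, r ^ p.1 * r ^ p.2 = ((1 - r)⁻¹) ^ 2 := by
  have hn : Summable fun n : ℕ => ‖r ^ n‖ := by
    simpa [Real.norm_eq_abs, abs_of_nonneg (pow_nonneg h0 _)]
      using summable_geometric_of_lt_one h0 h1
  rw [← tsum_mul_tsum_of_summable_norm hn hn, tsum_geometric_of_lt_one h0 h1, sq]

lemma level_bound (L₀ : ℕ) {ε : ℝ} (hε : 0 < ε) (h16 : ε ≤ 16⁻¹)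
    (hL₀ : ε ≤ ((2:ℝ)⁻¹) ^ (L₀ + 4)) :
    ((levelL L₀ ε : ℝ) + 3) * ((2:ℝ)⁻¹) ^ (levelL L₀ ε) ≤ 2 ^ (L₀ + 2) * ε := by
  set x := Real.logb 2 ε⁻¹ with hx
  set y := Real.logb 2 x with hy
  have hεinv : (16:ℝ) ≤ ε⁻¹ := by
    have := inv_anti₀ hε h16
    rwa [inv_inv] at this
  have hx4 : (4:ℝ) ≤ x := by
    rw [hx, Real.le_logb_iff_rpow_le one_lt_two (by positivity)]
    calc (2:ℝ) ^ (4:ℝ) = 16 := by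
          rw [show (4:ℝ) = ((4:ℕ):ℝ) by norm_num, Real.rpow_natCast]; norm_num
      _ ≤ ε⁻¹ := hεinv
  have hpowinv : (((2:ℝ)⁻¹) ^ (L₀+4))⁻¹ = (2:ℝ) ^ (L₀+4) := by
    rw [inv_pow, inv_inv]
  have hεinvL : (2:ℝ) ^ (L₀+4) ≤ ε⁻¹ := by
    have := inv_anti₀ hε hL₀
    rwa [hpowinv] at this
  have hxL : (L₀:ℝ) + 4 ≤ x := by
    rw [hx, Real.le_logb_iff_rpow_le one_lt_two (by positivity)]
    calc (2:ℝ) ^ ((L₀:ℝ) + 4) = (2:ℝ) ^ (L₀+4 : ℕ) := by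
          rw [show ((L₀:ℝ)+4) = ((L₀+4:ℕ):ℝ) by push_cast; ring, Real.rpow_natCast]
      _ ≤ ε⁻¹ := hεinvL
  have hy0 : 0 ≤ y := Real.logb_nonneg one_lt_two (by linarith)
  have hlog2 : (1/2:ℝ) ≤ Real.log 2 := by
    have := Real.log_two_gt_d9; norm_num at this ⊢; linarith
  have hy2x : y ≤ 2 * x := by
    have hlx : Real.log x ≤ x - 1 := Real.log_le_sub_one_of_pos (by linarith)
    rw [hy, Real.logb, div_le_iff₀ (by linarith)]
    nlinarith
  have hz4 : (L₀:ℤ) + 4 ≤ ⌈x + y⌉ := by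
    have h1 : ((L₀:ℝ)) + 4 ≤ x + y := by linarith
    have h2 : ((L₀:ℝ)) + 4 ≤ (⌈x + y⌉ : ℝ) := le_trans h1 (Int.le_ceil _)
    exact_mod_cast h2
  have hLdef : levelL L₀ ε = (⌈x + y⌉ - (L₀:ℤ)).toNat := by
    unfold levelL
    rw [← hx, ← hy, max_eq_left (by omega)]
  have hLcast : ((levelL L₀ ε : ℕ) : ℝ) = ((⌈x + y⌉ - (L₀:ℤ) : ℤ) : ℝ) := by
    have h0 : (0:ℤ) ≤ ⌈x + y⌉ - (L₀:ℤ) := by omega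
    rw [hLdef]
    exact_mod_cast Int.toNat_of_nonneg h0
  set L : ℕ := levelL L₀ ε with hLL
  have hLlb : x + y - L₀ ≤ (L:ℝ) := by
    rw [hLcast]
    have := Int.le_ceil (x + y)
    push_cast
    linarith
  have hLub : (L:ℝ) ≤ x + y + 1 - L₀ := by
    rw [hLcast]
    have := Int.ceil_lt_add_one (x + y)
    push_cast
    linarith
  have h2x : (2:ℝ) ^ x = ε⁻¹ := Real.rpow_logb two_pos (by norm_num) (by positivity)
  have h2y : (2:ℝ) ^ y = x := Real.rpow_logb two_pos (by norm_num) (by linarith)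
  have hx0 : x ≠ 0 := by linarith
  have hpow : ((2:ℝ)⁻¹) ^ L ≤ 2 ^ L₀ * ε * x⁻¹ := by
    have e1 : ((2:ℝ)⁻¹) ^ L = ((2:ℝ) ^ ((L:ℕ):ℝ))⁻¹ := by rw [Real.rpow_natCast, inv_pow]
    have e2 : (2:ℝ) ^ (x + y - (L₀:ℝ)) ≤ (2:ℝ) ^ ((L:ℕ):ℝ) :=
      Real.rpow_le_rpow_of_exponent_le one_le_two (by linarith)
    have e3 : (0:ℝ) < (2:ℝ) ^ (x + y - (L₀:ℝ)) := Real.rpow_pos_of_pos two_pos _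
    have e4 : ((2:ℝ) ^ ((L:ℕ):ℝ))⁻¹ ≤ ((2:ℝ) ^ (x + y - (L₀:ℝ)))⁻¹ := inv_anti₀ e3 e2
    have e5 : (2:ℝ) ^ (x + y - (L₀:ℝ)) = ε⁻¹ * x / 2 ^ L₀ := by
      rw [Real.rpow_sub two_pos, Real.rpow_add two_pos, h2x, h2y, Real.rpow_natCast]
    have e6 : ((2:ℝ) ^ (x + y - (L₀:ℝ)))⁻¹ = 2 ^ L₀ * ε * x⁻¹ := by
      rw [e5]
      field_simp
    rw [e1, ← e6]
    exact e4
  have hL3 : (L:ℝ) + 3 ≤ 4 * x := by linarith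
  calc ((L:ℝ) + 3) * ((2:ℝ)⁻¹) ^ L ≤ (4 * x) * (2 ^ L₀ * ε * x⁻¹) :=
        mul_le_mul hL3 hpow (by positivity) (by linarith)
    _ = 2 ^ (L₀ + 2) * ε := by
        field_simp
        ring

lemma bias_tail {c₁ : ℝ} (N₀ P₀ : ℕ)
    (μf : ℕ × ℕ → ℝ) (A : ℝ) (hA : HasSum μf A)
    (hAabs : Summable fun ℓ => |μf ℓ|)
    (hbias : ∀ ℓ : ℕ × ℕ, |μf ℓ| ≤ c₁ * (resN N₀ ℓ.1)⁻¹ * (resP P₀ ℓ.2)⁻¹) (L : ℕ) :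
    |∑ ℓ ∈ idxSet L, μf ℓ - A| ≤
      c₁ * ((N₀:ℝ) * P₀)⁻¹ * (((L:ℝ) + 3) * ((2:ℝ)⁻¹) ^ L) := by
  set g : ℕ × ℕ → ℝ :=
    fun ℓ => c₁ * ((N₀:ℝ) * P₀)⁻¹ * (((2:ℝ)⁻¹) ^ ℓ.1 * ((2:ℝ)⁻¹) ^ ℓ.2) with hg
  have hgeq : ∀ ℓ : ℕ × ℕ, g ℓ = c₁ * (resN N₀ ℓ.1)⁻¹ * (resP P₀ ℓ.2)⁻¹ := by
    intro ℓ
    simp only [hg, resN, resP]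
    rw [mul_inv, mul_inv, mul_inv, inv_pow, inv_pow]
    ring
  have hgs : Summable g := (summable_prod_geom (by norm_num) (by norm_num)).mul_left _
  have hsum := Summable.sum_add_tsum_subtype_compl hA.summable (idxSet L)
  have htsum : ∑' ℓ, μf ℓ = A := hA.tsum_eq
  have hd : ∑ ℓ ∈ idxSet L, μf ℓ - A = -∑' x : {x : ℕ × ℕ // x ∉ idxSet L}, μf x := by
    rw [← htsum]; linarith [hsum]
  rw [hd, abs_neg]
  have habs' : Summable fun x : {x : ℕ × ℕ // x ∉ idxSet L} => |μf ↑x| :=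
    hAabs.subtype {x | x ∉ idxSet L}
  have hgsub : Summable fun x : {x : ℕ × ℕ // x ∉ idxSet L} => g ↑x :=
    hgs.subtype {x | x ∉ idxSet L}
  have step1 : |∑' x : {x : ℕ × ℕ // x ∉ idxSet L}, μf ↑x| ≤
      ∑' x : {x : ℕ × ℕ // x ∉ idxSet L}, |μf ↑x| := by
    have h2 : Summable fun x : {x : ℕ × ℕ // x ∉ idxSet L} => ‖μf ↑x‖ := by
      simpa [Real.norm_eq_abs] using habs'
    have := norm_tsum_le_tsum_norm h2
    simpa [Real.norm_eq_abs] using this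
  have step2 : ∑' x : {x : ℕ × ℕ // x ∉ idxSet L}, |μf ↑x| ≤
      ∑' x : {x : ℕ × ℕ // x ∉ idxSet L}, g ↑x := by
    refine Summable.tsum_le_tsum (fun x => ?_) habs' hgsub
    rw [hgeq]
    exact hbias _
  have hg2 := Summable.sum_add_tsum_subtype_compl hgs (idxSet L)
  have htg : ∑' ℓ, g ℓ = c₁ * ((N₀:ℝ) * P₀)⁻¹ * 4 := by
    rw [hg, tsum_mul_left, tsum_prod_geom (by norm_num) (by norm_num)]
    norm_num
  have hsg : ∑ ℓ ∈ idxSet L, g ℓ =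
      c₁ * ((N₀:ℝ) * P₀)⁻¹ * (4 - ((L:ℝ) + 3) * ((2:ℝ)⁻¹) ^ L) := by
    rw [hg, ← Finset.mul_sum, sum_idxSet_geom]
  have step3 : ∑' x : {x : ℕ × ℕ // x ∉ idxSet L}, g ↑x =
      c₁ * ((N₀:ℝ) * P₀)⁻¹ * (((L:ℝ) + 3) * ((2:ℝ)⁻¹) ^ L) := by
    have : ∑' x : {x : ℕ × ℕ // x ∉ idxSet L}, g ↑x = ∑' ℓ, g ℓ - ∑ ℓ ∈ idxSet L, g ℓ := by
      linarith [hg2]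
    rw [this, htg, hsg]
    ring
  calc |∑' x : {x : ℕ × ℕ // x ∉ idxSet L}, μf ↑x| ≤
        ∑' x : {x : ℕ × ℕ // x ∉ idxSet L}, |μf ↑x| := step1
    _ ≤ ∑' x : {x : ℕ × ℕ // x ∉ idxSet L}, g ↑x := step2
    _ = _ := step3

lemma term_bound (N₀ P₀ : ℕ) (hN₀ : 0 < N₀) (hP₀ : 0 < P₀) {ε : ℝ} (hε : 0 < ε)
    {c₂ v : ℝ} (hc₂ : 0 < c₂) (hv : 0 ≤ v) (ℓ : ℕ × ℕ)
    (hvb : v ≤ c₂ * ((resN N₀ ℓ.1)⁻¹) ^ 2 * ((resP P₀ ℓ.2)⁻¹) ^ 2) :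
    ((numSamples N₀ P₀ ε ℓ : ℝ))⁻¹ * v ≤
      (c₂ * ε ^ 2) * (((2:ℝ) ^ (-(1:ℝ)/2)) ^ ℓ.1 * ((2:ℝ) ^ (-(1:ℝ)/2)) ^ ℓ.2) := by
  have hN : (0:ℝ) < resN N₀ ℓ.1 := mul_pos (by exact_mod_cast hN₀) (pow_pos two_pos _)
  have hP : (0:ℝ) < resP P₀ ℓ.2 := mul_pos (by exact_mod_cast hP₀) (pow_pos two_pos _)
  set a := resN N₀ ℓ.1 with ha
  set b := resP P₀ ℓ.2 with hb
  have harg : (0:ℝ) < ε⁻¹ ^ 2 * a ^ (-(3:ℝ)/2) * b ^ (-(3:ℝ)/2) := by positivity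
  have hM1 : ε⁻¹ ^ 2 * a ^ (-(3:ℝ)/2) * b ^ (-(3:ℝ)/2) ≤ (numSamples N₀ P₀ ε ℓ : ℝ) :=
    Nat.le_ceil _
  have hMinv : ((numSamples N₀ P₀ ε ℓ : ℝ))⁻¹ ≤ ε ^ 2 * a ^ ((3:ℝ)/2) * b ^ ((3:ℝ)/2) := by
    have h2 := inv_anti₀ harg hM1
    calc ((numSamples N₀ P₀ ε ℓ : ℝ))⁻¹ ≤
          (ε⁻¹ ^ 2 * a ^ (-(3:ℝ)/2) * b ^ (-(3:ℝ)/2))⁻¹ := h2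
      _ = ε ^ 2 * a ^ ((3:ℝ)/2) * b ^ ((3:ℝ)/2) := by
          rw [mul_inv, mul_inv, inv_pow, inv_inv, show (-(3:ℝ)/2) = -((3:ℝ)/2) by norm_num,
            Real.rpow_neg hN.le, Real.rpow_neg hP.le, inv_inv, inv_inv]
  have ha2 : (a⁻¹) ^ 2 = a ^ (-(2:ℝ)) := by
    rw [inv_pow, ← Real.rpow_natCast a 2, ← Real.rpow_neg hN.le]
    norm_num
  have hb2 : (b⁻¹) ^ 2 = b ^ (-(2:ℝ)) := by
    rw [inv_pow, ← Real.rpow_natCast b 2, ← Real.rpow_neg hP.le]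
    norm_num
  have hmain : ((numSamples N₀ P₀ ε ℓ : ℝ))⁻¹ * v ≤
      (c₂ * ε ^ 2) * (a ^ (-(1:ℝ)/2) * b ^ (-(1:ℝ)/2)) := by
    calc ((numSamples N₀ P₀ ε ℓ : ℝ))⁻¹ * v ≤
          (ε ^ 2 * a ^ ((3:ℝ)/2) * b ^ ((3:ℝ)/2)) * (c₂ * (a⁻¹) ^ 2 * (b⁻¹) ^ 2) :=
        mul_le_mul hMinv hvb hv (by positivity)
      _ = (c₂ * ε ^ 2) * ((a ^ ((3:ℝ)/2) * a ^ (-(2:ℝ))) * (b ^ ((3:ℝ)/2) * b ^ (-(2:ℝ)))) := by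
          rw [ha2, hb2]; ring
      _ = (c₂ * ε ^ 2) * (a ^ (-(1:ℝ)/2) * b ^ (-(1:ℝ)/2)) := by
          rw [← Real.rpow_add hN, ← Real.rpow_add hP]
          norm_num
  refine le_trans hmain ?_
  have hfa : a ^ (-(1:ℝ)/2) ≤ ((2:ℝ) ^ (-(1:ℝ)/2)) ^ ℓ.1 := by
    have h1 : ((2:ℝ) ^ ℓ.1 : ℝ) ≤ a := by
      rw [ha, resN]
      exact le_mul_of_one_le_left (pow_pos two_pos _).le (by exact_mod_cast hN₀)
    have h2 := Real.rpow_le_rpow_of_nonpos (pow_pos two_pos ℓ.1) h1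
      (by norm_num : (-(1:ℝ)/2) ≤ 0)
    refine le_trans h2 (le_of_eq ?_)
    rw [← Real.rpow_natCast 2 ℓ.1, ← Real.rpow_mul (by norm_num : (0:ℝ) ≤ 2), mul_comm,
      Real.rpow_mul (by norm_num : (0:ℝ) ≤ 2), Real.rpow_natCast]
  have hfb : b ^ (-(1:ℝ)/2) ≤ ((2:ℝ) ^ (-(1:ℝ)/2)) ^ ℓ.2 := by
    have h1 : ((2:ℝ) ^ ℓ.2 : ℝ) ≤ b := by
      rw [hb, resP]
      exact le_mul_of_one_le_left (pow_pos two_pos _).le (by exact_mod_cast hP₀)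
    have h2 := Real.rpow_le_rpow_of_nonpos (pow_pos two_pos ℓ.2) h1
      (by norm_num : (-(1:ℝ)/2) ≤ 0)
    refine le_trans h2 (le_of_eq ?_)
    rw [← Real.rpow_natCast 2 ℓ.2, ← Real.rpow_mul (by norm_num : (0:ℝ) ≤ 2), mul_comm,
      Real.rpow_mul (by norm_num : (0:ℝ) ≤ 2), Real.rpow_natCast]
  refine mul_le_mul_of_nonneg_left ?_ (by positivity)
  exact mul_le_mul hfa hfb (Real.rpow_pos_of_pos hP _).le
    (pow_nonneg (Real.rpow_pos_of_pos two_pos _).le _)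

/-- Mean-squared-error half of the MIEnKF complexity theorem. -/
theorem mienkf_mse {Ω : Type*} [MeasurableSpace Ω] (P : Measure Ω) [IsProbabilityMeasure P]
    (N₀ P₀ : ℕ) (hN₀ : 0 < N₀) (hP₀ : 0 < P₀)
    (Δ : (ℕ × ℕ) × ℕ → Ω → ℝ)
    (hL2 : ∀ i, MemLp (Δ i) 2 P)
    (hindep : iIndepFun Δ P)
    (hid : ∀ (ℓ : ℕ × ℕ) (m : ℕ), IdentDistrib (Δ (ℓ, m)) (Δ (ℓ, 1)) P P)
    (c₁ c₂ : ℝ) (hc₁ : 0 < c₁) (hc₂ : 0 < c₂)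
    (hbias : ∀ ℓ : ℕ × ℕ, |∫ ω, Δ (ℓ, 1) ω ∂P| ≤ c₁ * (resN N₀ ℓ.1)⁻¹ * (resP P₀ ℓ.2)⁻¹)
    (hvar : ∀ ℓ : ℕ × ℕ,
      variance (Δ (ℓ, 1)) P ≤ c₂ * ((resN N₀ ℓ.1)⁻¹) ^ 2 * ((resP P₀ ℓ.2)⁻¹) ^ 2)
    (A : ℝ) (hA : HasSum (fun ℓ : ℕ × ℕ => ∫ ω, Δ (ℓ, 1) ω ∂P) A)
    (hAabs : Summable fun ℓ : ℕ × ℕ => |∫ ω, Δ (ℓ, 1) ω ∂P|)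
    (L₀ : ℕ) :
    ∃ C > 0, ∃ ε₀ : ℝ, 0 < ε₀ ∧ ε₀ < 1 ∧
      ∀ ε : ℝ, 0 < ε → ε ≤ ε₀ →
        ∫ ω, (MIestimator N₀ P₀ L₀ ε Δ ω - A) ^ 2 ∂P ≤ C * ε ^ 2 := by
  classical
  set r : ℝ := (2:ℝ) ^ (-(1:ℝ)/2) with hr
  have hr0 : 0 < r := Real.rpow_pos_of_pos two_pos _
  have hr1 : r < 1 := Real.rpow_lt_one_of_one_lt_of_neg one_lt_two (by norm_num)
  set Kv : ℝ := ((1 - r)⁻¹) ^ 2 with hKv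
  have hKvpos : 0 < Kv := by
    have : 0 < 1 - r := by linarith
    positivity
  set B : ℝ := c₁ * ((N₀:ℝ) * P₀)⁻¹ * 2 ^ (L₀ + 2) with hB
  have hBpos : 0 < B := by
    have h1 : (0:ℝ) < (N₀:ℝ) := by exact_mod_cast hN₀
    have h2 : (0:ℝ) < (P₀:ℝ) := by exact_mod_cast hP₀
    positivity
  refine ⟨c₂ * Kv + B ^ 2, by positivity, min (16:ℝ)⁻¹ (((2:ℝ)⁻¹) ^ (L₀ + 4)), ?_, ?_, ?_⟩
  · positivity
  · exact lt_of_le_of_lt (min_le_left _ _) (by norm_num)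
  intro ε hε hεle
  have h16 : ε ≤ 16⁻¹ := le_trans hεle (min_le_left _ _)
  have hL₀ε : ε ≤ ((2:ℝ)⁻¹) ^ (L₀ + 4) := le_trans hεle (min_le_right _ _)
  set L : ℕ := levelL L₀ ε with hLdef
  set M : ℕ × ℕ → ℕ := numSamples N₀ P₀ ε with hMdef
  set I : Finset (ℕ × ℕ) := idxSet L with hIdef
  set μf : ℕ × ℕ → ℝ := fun ℓ => ∫ ω, Δ (ℓ, 1) ω ∂P with hμf
  set S : ℝ := ∑ ℓ ∈ I, μf ℓ with hS
  -- positivity of the number of samples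
  have hMpos : ∀ ℓ : ℕ × ℕ, 0 < M ℓ := by
    intro ℓ
    have hN : (0:ℝ) < resN N₀ ℓ.1 := mul_pos (by exact_mod_cast hN₀) (pow_pos two_pos _)
    have hP : (0:ℝ) < resP P₀ ℓ.2 := mul_pos (by exact_mod_cast hP₀) (pow_pos two_pos _)
    exact Nat.ceil_pos.mpr (by positivity)
  have hMcast : ∀ ℓ : ℕ × ℕ, (0:ℝ) < (M ℓ : ℝ) := fun ℓ => by exact_mod_cast hMpos ℓ
  -- reindexing the estimator as a single finite sum
  set Y : (ℕ × ℕ) × ℕ → Ω → ℝ := fun i ω => ((M i.1 : ℝ))⁻¹ * Δ i ω with hY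
  set T : Finset ((ℕ × ℕ) × ℕ) :=
    I.biUnion (fun ℓ => (Finset.Icc 1 (M ℓ)).image fun m => (ℓ, m)) with hT
  have hdisjT : (↑I : Set (ℕ × ℕ)).PairwiseDisjoint
      (fun ℓ => (Finset.Icc 1 (M ℓ)).image fun m => (ℓ, m)) := by
    intro a _ b _ hab
    simp only [Function.onFun, Finset.disjoint_left]
    intro i hi hi2
    simp only [Finset.mem_image] at hi hi2
    obtain ⟨m, _, rfl⟩ := hi
    obtain ⟨m', _, h'⟩ := hi2
    exact hab ((Prod.ext_iff.mp h').1).symm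
  have hXeq : MIestimator N₀ P₀ L₀ ε Δ = ∑ i ∈ T, Y i := by
    funext ω
    rw [Finset.sum_apply]
    rw [hT, Finset.sum_biUnion hdisjT]
    refine Finset.sum_congr rfl fun ℓ hℓ => ?_
    rw [Finset.sum_image fun m hm m' hm' h => (Prod.ext_iff.mp h).2]
    simp only [hY]
    rw [← Finset.mul_sum]
  -- integrability facts
  have hInt : ∀ i, Integrable (Δ i) P := fun i => (hL2 i).integrable one_le_two
  have hYmem : ∀ i, MemLp (Y i) 2 P := fun i => (hL2 i).const_mul _
  have hXmem : MemLp (MIestimator N₀ P₀ L₀ ε Δ) 2 P := by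
    rw [hXeq]
    exact memLp_finset_sum' _ fun i _ => hYmem i
  -- expectation of the estimator
  have hEX : ∫ ω, MIestimator N₀ P₀ L₀ ε Δ ω ∂P = S := by
    have h1 : ∀ ℓ ∈ I, Integrable (fun ω => ((M ℓ : ℝ))⁻¹ * ∑ m ∈ Finset.Icc 1 (M ℓ),
        Δ (ℓ, m) ω) P :=
      fun ℓ _ => (integrable_finset_sum _ fun m _ => hInt (ℓ, m)).const_mul _
    calc ∫ ω, MIestimator N₀ P₀ L₀ ε Δ ω ∂P
        = ∑ ℓ ∈ I, ∫ ω, ((M ℓ : ℝ))⁻¹ * ∑ m ∈ Finset.Icc 1 (M ℓ), Δ (ℓ, m) ω ∂P := by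
          rw [← integral_finset_sum _ h1]
          rfl
      _ = ∑ ℓ ∈ I, μf ℓ := by
          refine Finset.sum_congr rfl fun ℓ hℓ => ?_
          rw [integral_const_mul, integral_finset_sum _ fun m _ => hInt (ℓ, m)]
          have h2 : ∀ m ∈ Finset.Icc 1 (M ℓ), ∫ ω, Δ (ℓ, m) ω ∂P = μf ℓ :=
            fun m _ => (hid ℓ m).integral_eq
          rw [Finset.sum_congr rfl h2, Finset.sum_const, Nat.card_Icc, Nat.add_sub_cancel,
            nsmul_eq_mul, ← mul_assoc, inv_mul_cancel₀ (hMcast ℓ).ne', one_mul]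
      _ = S := rfl
  -- variance of the estimator
  have hpair : Set.Pairwise ↑T fun i j => IndepFun (Y i) (Y j) P := by
    intro i _ j _ hij
    exact (hindep.indepFun hij).comp (measurable_const_mul _) (measurable_const_mul _)
  have hvarX : variance (MIestimator N₀ P₀ L₀ ε Δ) P =
      ∑ ℓ ∈ I, ((M ℓ : ℝ))⁻¹ * variance (Δ (ℓ, 1)) P := by
    rw [hXeq, IndepFun.variance_sum (fun i _ => hYmem i) hpair, hT,
      Finset.sum_biUnion hdisjT]
    refine Finset.sum_congr rfl fun ℓ hℓ => ?_
    rw [Finset.sum_image fun m hm m' hm' h => (Prod.ext_iff.mp h).2]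
    have h3 : ∀ m ∈ Finset.Icc 1 (M ℓ),
        variance (Y (ℓ, m)) P = ((M ℓ : ℝ))⁻¹ ^ 2 * variance (Δ (ℓ, 1)) P := by
      intro m _
      have h4 : variance (Y (ℓ, m)) P = ((M ℓ : ℝ))⁻¹ ^ 2 * variance (Δ (ℓ, m)) P :=
        variance_const_mul _ _ _
      rw [h4, (hid ℓ m).variance_eq]
    rw [Finset.sum_congr rfl h3, Finset.sum_const, Nat.card_Icc, Nat.add_sub_cancel,
      nsmul_eq_mul, pow_two, ← mul_assoc, ← mul_assoc, mul_inv_cancel₀ (hMcast ℓ).ne',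
      one_mul]
  have hvar_bound : variance (MIestimator N₀ P₀ L₀ ε Δ) P ≤ c₂ * Kv * ε ^ 2 := by
    rw [hvarX]
    have h5 : ∀ ℓ ∈ I, ((M ℓ : ℝ))⁻¹ * variance (Δ (ℓ, 1)) P ≤
        (c₂ * ε ^ 2) * (r ^ ℓ.1 * r ^ ℓ.2) :=
      fun ℓ _ => term_bound N₀ P₀ hN₀ hP₀ hε hc₂ (variance_nonneg _ _) ℓ (hvar ℓ)
    calc ∑ ℓ ∈ I, ((M ℓ : ℝ))⁻¹ * variance (Δ (ℓ, 1)) P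
        ≤ ∑ ℓ ∈ I, (c₂ * ε ^ 2) * (r ^ ℓ.1 * r ^ ℓ.2) := Finset.sum_le_sum h5
      _ = (c₂ * ε ^ 2) * ∑ ℓ ∈ I, r ^ ℓ.1 * r ^ ℓ.2 := by rw [Finset.mul_sum]
      _ ≤ (c₂ * ε ^ 2) * Kv := by
          refine mul_le_mul_of_nonneg_left ?_ (by positivity)
          have h6 : ∑ ℓ ∈ I, r ^ ℓ.1 * r ^ ℓ.2 ≤ ∑' p : ℕ × ℕ, r ^ p.1 * r ^ p.2 :=
            Summable.sum_le_tsum I (fun p _ => by positivity) (summable_prod_geom hr0.le hr1)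
          rw [hKv, ← tsum_prod_geom hr0.le hr1]
          exact h6
      _ = c₂ * Kv * ε ^ 2 := by ring
  -- mean squared error decomposition
  have hg : MemLp (fun ω => MIestimator N₀ P₀ L₀ ε Δ ω - S) 2 P :=
    hXmem.sub (memLp_const S)
  have hg2 : Integrable (fun ω => (MIestimator N₀ P₀ L₀ ε Δ ω - S) ^ 2) P := by
    have := hg.integrable_sq
    simpa using this
  have hg1 : Integrable (fun ω => MIestimator N₀ P₀ L₀ ε Δ ω - S) P :=
    hg.integrable one_le_two
  have hEg : ∫ ω, (MIestimator N₀ P₀ L₀ ε Δ ω - S) ∂P = 0 := by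
    rw [integral_sub (hXmem.integrable one_le_two) (integrable_const S), hEX,
      integral_const]
    simp
  have hvar_int : ∫ ω, (MIestimator N₀ P₀ L₀ ε Δ ω - S) ^ 2 ∂P =
      variance (MIestimator N₀ P₀ L₀ ε Δ) P := by
    have h7 := variance_eq_integral hXmem.aemeasurable
    rw [hEX] at h7
    rw [h7]
  have hMSE : ∫ ω, (MIestimator N₀ P₀ L₀ ε Δ ω - A) ^ 2 ∂P =
      variance (MIestimator N₀ P₀ L₀ ε Δ) P + (S - A) ^ 2 := by
    have key : ∀ ω, (MIestimator N₀ P₀ L₀ ε Δ ω - A) ^ 2 =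
        (MIestimator N₀ P₀ L₀ ε Δ ω - S) ^ 2 +
          ((2 * (S - A)) * (MIestimator N₀ P₀ L₀ ε Δ ω - S) + (S - A) ^ 2) := by
      intro ω; ring
    calc ∫ ω, (MIestimator N₀ P₀ L₀ ε Δ ω - A) ^ 2 ∂P
        = ∫ ω, ((MIestimator N₀ P₀ L₀ ε Δ ω - S) ^ 2 +
            ((2 * (S - A)) * (MIestimator N₀ P₀ L₀ ε Δ ω - S) + (S - A) ^ 2)) ∂P := by
          simp_rw [key]
      _ = ∫ ω, (MIestimator N₀ P₀ L₀ ε Δ ω - S) ^ 2 ∂P +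
            ((2 * (S - A)) * ∫ ω, (MIestimator N₀ P₀ L₀ ε Δ ω - S) ∂P + (S - A) ^ 2) := by
          have i1 : Integrable (fun ω => (2 * (S - A)) * (MIestimator N₀ P₀ L₀ ε Δ ω - S)) P :=
            hg1.const_mul _
          have i2 : Integrable (fun ω => (2 * (S - A)) * (MIestimator N₀ P₀ L₀ ε Δ ω - S) +
              (S - A) ^ 2) P := i1.add (integrable_const _)
          rw [integral_add hg2 i2, integral_add i1 (integrable_const _), integral_const_mul,
            integral_const]
          simp
      _ = variance (MIestimator N₀ P₀ L₀ ε Δ) P + (S - A) ^ 2 := by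
          rw [hEg, hvar_int]; ring
  -- bias bound
  have hbias_bound : |S - A| ≤ B * ε := by
    have h8 := bias_tail N₀ P₀ μf A hA hAabs hbias L
    have h9 := level_bound L₀ hε h16 hL₀ε
    calc |S - A| ≤ c₁ * ((N₀:ℝ) * P₀)⁻¹ * (((L:ℝ) + 3) * ((2:ℝ)⁻¹) ^ L) := h8
      _ ≤ c₁ * ((N₀:ℝ) * P₀)⁻¹ * (2 ^ (L₀ + 2) * ε) := by
          refine mul_le_mul_of_nonneg_left h9 ?_
          have h1 : (0:ℝ) < (N₀:ℝ) := by exact_mod_cast hN₀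
          have h2 : (0:ℝ) < (P₀:ℝ) := by exact_mod_cast hP₀
          positivity
      _ = B * ε := by rw [hB]; ring
  have hbias_sq : (S - A) ^ 2 ≤ B ^ 2 * ε ^ 2 := by
    have h10 : (S - A) ^ 2 = |S - A| ^ 2 := (sq_abs _).symm
    rw [h10]
    calc |S - A| ^ 2 ≤ (B * ε) ^ 2 :=
          pow_le_pow_left₀ (abs_nonneg _) hbias_bound 2
      _ = B ^ 2 * ε ^ 2 := by ring
  -- conclusion
  rw [hMSE]
  calc variance (MIestimator N₀ P₀ L₀ ε Δ) P + (S - A) ^ 2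
      ≤ c₂ * Kv * ε ^ 2 + B ^ 2 * ε ^ 2 := add_le_add hvar_bound hbias_sq
    _ = (c₂ * Kv + B ^ 2) * ε ^ 2 := by ring
end

section
/- Let N₀, P₀ ∈ ℕ and set N_{ℓ₁} = N₀·2^{ℓ₁}, P_{ℓ₂} = P₀·2^{ℓ₂} for ℓ = (ℓ₁,ℓ₂) ∈ ℕ₀². Fix L₀ ∈ ℕ₀ and for ε ∈ (0,1) set L(ε) = max(⌈log₂(ε⁻¹) + log₂ log₂(ε⁻¹)⌉ − L₀, 1), I(ε) = {ℓ ∈ ℕ₀² : ℓ₁ + ℓ₂ ≤ L(ε)}, and M_ℓ(ε) = ⌈ε⁻² N_{ℓ₁}^{-3/2} P_{ℓ₂}^{-3/2}⌉. Then the total work Cost(ε) := Σ_{ℓ ∈ I(ε)} M_ℓ(ε) · N_{ℓ₁} P_{ℓ₂} satisfies Cost(ε) ≂ ε⁻²; that is, there exist constants 0 < c ≤ C and ε₀ ∈ (0,1) such that c ε⁻² ≤ Cost(ε) ≤ C ε⁻² for all ε ∈ (0, ε₀]. -/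
/-- Total work `Cost(ε) = Σ_{ℓ ∈ I(ε)} M_ℓ(ε) · N_{ℓ₁} P_{ℓ₂}`. -/
noncomputable def totalCost (N₀ P₀ L₀ : ℕ) (ε : ℝ) : ℝ :=
  ∑ ℓ ∈ idxSet (levelL L₀ ε), (numSamples N₀ P₀ ε ℓ : ℝ) * (resN N₀ ℓ.1 * resP P₀ ℓ.2)

private lemma pow_rpow_swap (n : ℕ) (r : ℝ) : ((2:ℝ) ^ n) ^ r = ((2:ℝ) ^ r) ^ n := by
  rw [← Real.rpow_natCast 2 n, ← Real.rpow_mul (by norm_num), mul_comm,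
    Real.rpow_mul (by norm_num : (0:ℝ) ≤ 2), Real.rpow_natCast]

private lemma s_le : (2:ℝ) ^ (-(1:ℝ)/2) ≤ 3/4 := by
  have hs0 : (0:ℝ) ≤ (2:ℝ) ^ (-(1:ℝ)/2) := Real.rpow_nonneg (by norm_num) _
  have hsq : ((2:ℝ) ^ (-(1:ℝ)/2)) ^ (2:ℕ) = 1/2 := by
    rw [← Real.rpow_natCast ((2:ℝ) ^ (-(1:ℝ)/2)) 2, ← Real.rpow_mul (by norm_num : (0:ℝ) ≤ 2)]
    norm_num
  nlinarith [hsq, hs0]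

private lemma geo_le (n : ℕ) : ∑ i ∈ Finset.range n, ((2:ℝ) ^ (-(1:ℝ)/2)) ^ i ≤ 4 := by
  have hs0 : (0:ℝ) ≤ (2:ℝ) ^ (-(1:ℝ)/2) := Real.rpow_nonneg (by norm_num) _
  have h34 := s_le
  rw [geom_sum_eq (by nlinarith : (2:ℝ) ^ (-(1:ℝ)/2) ≠ 1)]
  rw [div_le_iff_of_neg (by nlinarith : (2:ℝ) ^ (-(1:ℝ)/2) - 1 < 0)]
  nlinarith [pow_nonneg hs0 n]

set_option maxHeartbeats 1000000 in
/-- Computational-cost half of the MIEnKF complexity theorem: `Cost(ε) ≂ ε⁻²`. -/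
theorem mienkf_cost (N₀ P₀ : ℕ) (hN₀ : 0 < N₀) (hP₀ : 0 < P₀) (L₀ : ℕ) :
    ∃ c C : ℝ, 0 < c ∧ c ≤ C ∧ ∃ ε₀ : ℝ, 0 < ε₀ ∧ ε₀ < 1 ∧
      ∀ ε : ℝ, 0 < ε → ε ≤ ε₀ →
        c * ε⁻¹ ^ 2 ≤ totalCost N₀ P₀ L₀ ε ∧ totalCost N₀ P₀ L₀ ε ≤ C * ε⁻¹ ^ 2 := by
  have h2 : (0:ℝ) < 2 := two_pos
  have hN : (0:ℝ) < N₀ := by exact_mod_cast hN₀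
  have hP : (0:ℝ) < P₀ := by exact_mod_cast hP₀
  set c : ℝ := (N₀:ℝ) ^ (-(3:ℝ)/2) * (P₀:ℝ) ^ (-(3:ℝ)/2) * ((N₀:ℝ) * (P₀:ℝ)) with hc
  have hcpos : 0 < c := by positivity
  set K : ℝ := 16 * ((N₀:ℝ) ^ (-(1:ℝ)/2) * (P₀:ℝ) ^ (-(1:ℝ)/2)) + 10800 * ((N₀:ℝ) * (P₀:ℝ))
    with hKdef
  refine ⟨c, max c K, hcpos, le_max_left _ _, ((2:ℝ) ^ (L₀ + 2))⁻¹, by positivity, ?_, ?_⟩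
  · rw [inv_lt_one_iff₀]
    right
    exact one_lt_pow₀ (by norm_num) (by omega)
  intro ε hε hεle
  have hεinv : (0:ℝ) < ε⁻¹ := inv_pos.mpr hε
  have hεsq : (0:ℝ) ≤ ε⁻¹ ^ 2 := by positivity
  have htwo : (2:ℝ) ^ (L₀ + 2) ≤ ε⁻¹ := by
    have := inv_anti₀ hε hεle
    rwa [inv_inv] at this
  -- basic resolutions positivity
  have hresN : ∀ i, (0:ℝ) < resN N₀ i := fun i => by unfold resN; positivity
  have hresP : ∀ i, (0:ℝ) < resP P₀ i := fun i => by unfold resP; positivity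
  constructor
  · -- lower bound via the (0,0) term
    have hmem : ((0,0) : ℕ × ℕ) ∈ idxSet (levelL L₀ ε) := by simp [idxSet]
    have hsingle := Finset.single_le_sum
      (f := fun ℓ => (numSamples N₀ P₀ ε ℓ : ℝ) * (resN N₀ ℓ.1 * resP P₀ ℓ.2))
      (fun ℓ _ => mul_nonneg (Nat.cast_nonneg _) (mul_pos (hresN ℓ.1) (hresP ℓ.2)).le) hmem
    refine le_trans ?_ hsingle
    have hx : ε⁻¹ ^ 2 * resN N₀ 0 ^ (-(3:ℝ)/2) * resP P₀ 0 ^ (-(3:ℝ)/2)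
        ≤ (numSamples N₀ P₀ ε (0,0) : ℝ) := Nat.le_ceil _
    have h00N : resN N₀ 0 = (N₀:ℝ) := by simp [resN]
    have h00P : resP P₀ 0 = (P₀:ℝ) := by simp [resP]
    calc c * ε⁻¹ ^ 2
        = (ε⁻¹ ^ 2 * (N₀:ℝ) ^ (-(3:ℝ)/2) * (P₀:ℝ) ^ (-(3:ℝ)/2)) * ((N₀:ℝ) * (P₀:ℝ)) := by
          rw [hc]; ring
      _ ≤ (numSamples N₀ P₀ ε (0,0) : ℝ) * (resN N₀ (0,0).1 * resP P₀ (0,0).2) := by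
          rw [h00N, h00P] at hx ⊢
          exact mul_le_mul_of_nonneg_right hx (by positivity)
  · -- upper bound
    set lam := Real.logb 2 ε⁻¹ with hlamdef
    have hlamL : (L₀:ℝ) + 2 ≤ lam := by
      rw [hlamdef, Real.le_logb_iff_rpow_le one_lt_two hεinv]
      have hcast : ((L₀:ℝ) + 2) = ((L₀ + 2 : ℕ) : ℝ) := by push_cast; ring
      rw [hcast, Real.rpow_natCast]
      exact htwo
    have hlam2 : (2:ℝ) ≤ lam := by
      have : (0:ℝ) ≤ (L₀:ℝ) := Nat.cast_nonneg _
      linarith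
    have hlampos : (0:ℝ) < lam := by linarith
    set mu := Real.logb 2 lam with hmudef
    have hmu1 : (1:ℝ) ≤ mu := by
      rw [hmudef, Real.le_logb_iff_rpow_le one_lt_two hlampos, Real.rpow_one]
      exact hlam2
    have hlog2pos : (0:ℝ) < Real.log 2 := Real.log_pos one_lt_two
    have hmu2 : mu ≤ 2 * lam := by
      rw [hmudef, Real.logb, div_le_iff₀ hlog2pos]
      have hloglam : Real.log lam ≤ lam := by
        have := Real.log_le_sub_one_of_pos hlampos
        linarith
      nlinarith [Real.log_two_gt_d9]
    -- the level
    have hceil3 : (L₀:ℤ) + 3 ≤ ⌈lam + mu⌉ := by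
      have h1 : ((L₀:ℤ) + 3 : ℝ) ≤ lam + mu := by push_cast; linarith
      exact_mod_cast h1.trans (Int.le_ceil _)
    set L := levelL L₀ ε with hLdef
    have hLZ : (L:ℤ) = ⌈lam + mu⌉ - L₀ := by
      rw [hLdef, levelL, ← hlamdef, ← hmudef, max_eq_left (by omega), Int.toNat_of_nonneg (by omega)]
    have hLreal : (L:ℝ) ≤ lam + mu + 1 := by
      have h1 : ((L:ℤ):ℝ) = (⌈lam + mu⌉ : ℝ) - (L₀:ℝ) := by rw [hLZ]; push_cast; ring
      have h2' := Int.ceil_lt_add_one (lam + mu)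
      have h3 : (0:ℝ) ≤ (L₀:ℝ) := Nat.cast_nonneg _
      push_cast at h1
      linarith
    have hL5 : (L:ℝ) + 1 ≤ 5 * lam := by linarith
    have h2L : ((2:ℝ) ^ (L:ℕ)) ≤ 2 * ε⁻¹ * lam := by
      rw [← Real.rpow_natCast 2 L]
      calc (2:ℝ) ^ ((L:ℕ):ℝ) ≤ 2 ^ (lam + mu + 1) :=
            Real.rpow_le_rpow_of_exponent_le one_le_two hLreal
        _ = 2 ^ lam * 2 ^ mu * 2 ^ (1:ℝ) := by rw [Real.rpow_add h2, Real.rpow_add h2]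
        _ = 2 * ε⁻¹ * lam := by
            rw [Real.rpow_logb h2 (by norm_num) hεinv, Real.rpow_logb h2 (by norm_num) hlampos,
              Real.rpow_one]
            ring
    -- lam^3 ≤ 216 ε⁻¹
    have hlam3 : lam ^ 3 ≤ 216 * ε⁻¹ := by
      set t13 : ℝ := ε⁻¹ ^ ((1:ℝ)/3) with ht13
      have h13 : (0:ℝ) < t13 := Real.rpow_pos_of_pos hεinv _
      have hlog : Real.log ε⁻¹ = 3 * Real.log t13 := by
        rw [ht13, Real.log_rpow hεinv]; ring
      have h1 : Real.log t13 ≤ t13 := by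
        have := Real.log_le_sub_one_of_pos h13; linarith
      have hlamle : lam ≤ 6 * t13 := by
        rw [hlamdef, Real.logb, div_le_iff₀ hlog2pos, hlog]
        nlinarith [Real.log_two_gt_d9]
      have hcube : t13 ^ (3:ℕ) = ε⁻¹ := by
        rw [ht13, ← Real.rpow_natCast (ε⁻¹ ^ ((1:ℝ)/3)) 3, ← Real.rpow_mul hεinv.le]
        norm_num
      calc lam ^ 3 ≤ (6 * t13) ^ 3 := pow_le_pow_left₀ hlampos.le hlamle 3
        _ = 216 * ε⁻¹ := by rw [mul_pow, hcube]; norm_num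
    -- pointwise term bound
    set s : ℝ := (2:ℝ) ^ (-(1:ℝ)/2) with hsdef
    have hs0 : (0:ℝ) ≤ s := Real.rpow_nonneg (by norm_num) _
    have hres_rN : ∀ i, resN N₀ i ^ (-(1:ℝ)/2) = (N₀:ℝ) ^ (-(1:ℝ)/2) * s ^ i := fun i => by
      rw [resN, Real.mul_rpow hN.le (by positivity), hsdef, pow_rpow_swap]
    have hres_rP : ∀ i, resP P₀ i ^ (-(1:ℝ)/2) = (P₀:ℝ) ^ (-(1:ℝ)/2) * s ^ i := fun i => by
      rw [resP, Real.mul_rpow hP.le (by positivity), hsdef, pow_rpow_swap]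
    have hkey : ∀ y : ℝ, 0 < y → y ^ (-(3:ℝ)/2) * y = y ^ (-(1:ℝ)/2) := by
      intro y hy
      nth_rewrite 2 [← Real.rpow_one y]
      rw [← Real.rpow_add hy]
      norm_num
    have hterm : ∀ ℓ ∈ idxSet L,
        (numSamples N₀ P₀ ε ℓ : ℝ) * (resN N₀ ℓ.1 * resP P₀ ℓ.2) ≤
        ε⁻¹ ^ 2 * (((N₀:ℝ) ^ (-(1:ℝ)/2) * s ^ ℓ.1) * ((P₀:ℝ) ^ (-(1:ℝ)/2) * s ^ ℓ.2))
          + (N₀:ℝ) * (P₀:ℝ) * (2:ℝ) ^ (L:ℕ) := by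
      intro ℓ hℓ
      have hsum : ℓ.1 + ℓ.2 ≤ L := (Finset.mem_filter.mp hℓ).2
      have hx0 : 0 ≤ ε⁻¹ ^ 2 * resN N₀ ℓ.1 ^ (-(3:ℝ)/2) * resP P₀ ℓ.2 ^ (-(3:ℝ)/2) := by
        have := hresN ℓ.1; have := hresP ℓ.2; positivity
      have hM : (numSamples N₀ P₀ ε ℓ : ℝ) ≤
          ε⁻¹ ^ 2 * resN N₀ ℓ.1 ^ (-(3:ℝ)/2) * resP P₀ ℓ.2 ^ (-(3:ℝ)/2) + 1 :=
        le_of_lt (Nat.ceil_lt_add_one hx0)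
      have hprod : (0:ℝ) ≤ resN N₀ ℓ.1 * resP P₀ ℓ.2 :=
        (mul_pos (hresN ℓ.1) (hresP ℓ.2)).le
      calc (numSamples N₀ P₀ ε ℓ : ℝ) * (resN N₀ ℓ.1 * resP P₀ ℓ.2)
          ≤ (ε⁻¹ ^ 2 * resN N₀ ℓ.1 ^ (-(3:ℝ)/2) * resP P₀ ℓ.2 ^ (-(3:ℝ)/2) + 1)
              * (resN N₀ ℓ.1 * resP P₀ ℓ.2) := mul_le_mul_of_nonneg_right hM hprod
        _ = ε⁻¹ ^ 2 * ((resN N₀ ℓ.1 ^ (-(3:ℝ)/2) * resN N₀ ℓ.1)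
              * (resP P₀ ℓ.2 ^ (-(3:ℝ)/2) * resP P₀ ℓ.2))
              + resN N₀ ℓ.1 * resP P₀ ℓ.2 := by ring
        _ = ε⁻¹ ^ 2 * (((N₀:ℝ) ^ (-(1:ℝ)/2) * s ^ ℓ.1) * ((P₀:ℝ) ^ (-(1:ℝ)/2) * s ^ ℓ.2))
              + resN N₀ ℓ.1 * resP P₀ ℓ.2 := by
            rw [hkey _ (hresN ℓ.1), hkey _ (hresP ℓ.2), hres_rN, hres_rP]
        _ ≤ _ := by
            have heq : resN N₀ ℓ.1 * resP P₀ ℓ.2 = (N₀:ℝ) * (P₀:ℝ) * (2:ℝ) ^ (ℓ.1 + ℓ.2) := by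
              rw [resN, resP, pow_add]; ring
            have hle : resN N₀ ℓ.1 * resP P₀ ℓ.2 ≤ (N₀:ℝ) * (P₀:ℝ) * (2:ℝ) ^ (L:ℕ) := by
              rw [heq]
              exact mul_le_mul_of_nonneg_left (pow_le_pow_right₀ one_le_two hsum)
                (by positivity)
            exact add_le_add (le_refl _) hle
    -- sum the bound
    have hsum1 : ∑ ℓ ∈ idxSet L,
        ε⁻¹ ^ 2 * (((N₀:ℝ) ^ (-(1:ℝ)/2) * s ^ ℓ.1) * ((P₀:ℝ) ^ (-(1:ℝ)/2) * s ^ ℓ.2))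
        ≤ 16 * ((N₀:ℝ) ^ (-(1:ℝ)/2) * (P₀:ℝ) ^ (-(1:ℝ)/2)) * ε⁻¹ ^ 2 := by
      rw [← Finset.mul_sum]
      have hsub : ∑ ℓ ∈ idxSet L,
          ((N₀:ℝ) ^ (-(1:ℝ)/2) * s ^ ℓ.1) * ((P₀:ℝ) ^ (-(1:ℝ)/2) * s ^ ℓ.2)
          ≤ ∑ ℓ ∈ Finset.range (L+1) ×ˢ Finset.range (L+1),
          ((N₀:ℝ) ^ (-(1:ℝ)/2) * s ^ ℓ.1) * ((P₀:ℝ) ^ (-(1:ℝ)/2) * s ^ ℓ.2) :=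
        Finset.sum_le_sum_of_subset_of_nonneg (Finset.filter_subset _ _)
          (fun ℓ _ _ => by positivity)
      have hprodsum : ∑ ℓ ∈ Finset.range (L+1) ×ˢ Finset.range (L+1),
          ((N₀:ℝ) ^ (-(1:ℝ)/2) * s ^ ℓ.1) * ((P₀:ℝ) ^ (-(1:ℝ)/2) * s ^ ℓ.2)
          = ((N₀:ℝ) ^ (-(1:ℝ)/2) * ∑ i ∈ Finset.range (L+1), s ^ i)
            * ((P₀:ℝ) ^ (-(1:ℝ)/2) * ∑ j ∈ Finset.range (L+1), s ^ j) := by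
        have h1 := Finset.sum_product' (Finset.range (L+1)) (Finset.range (L+1))
          (fun i j => (((N₀:ℝ) ^ (-(1:ℝ)/2)) * s ^ i) * (((P₀:ℝ) ^ (-(1:ℝ)/2)) * s ^ j))
        rw [h1, ← Finset.sum_mul_sum, ← Finset.mul_sum, ← Finset.mul_sum]
      have hgeo := geo_le (L+1)
      rw [← hsdef] at hgeo
      have hNnn : (0:ℝ) ≤ (N₀:ℝ) ^ (-(1:ℝ)/2) := by positivity
      have hPnn : (0:ℝ) ≤ (P₀:ℝ) ^ (-(1:ℝ)/2) := by positivity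
      have hgnn : (0:ℝ) ≤ ∑ i ∈ Finset.range (L+1), s ^ i :=
        Finset.sum_nonneg fun i _ => pow_nonneg hs0 i
      calc ε⁻¹ ^ 2 * ∑ ℓ ∈ idxSet L,
            ((N₀:ℝ) ^ (-(1:ℝ)/2) * s ^ ℓ.1) * ((P₀:ℝ) ^ (-(1:ℝ)/2) * s ^ ℓ.2)
          ≤ ε⁻¹ ^ 2 * (((N₀:ℝ) ^ (-(1:ℝ)/2) * 4) * ((P₀:ℝ) ^ (-(1:ℝ)/2) * 4)) := by
            refine mul_le_mul_of_nonneg_left ?_ hεsq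
            refine hsub.trans ?_
            rw [hprodsum]
            exact mul_le_mul (mul_le_mul_of_nonneg_left hgeo hNnn)
              (mul_le_mul_of_nonneg_left hgeo hPnn) (by positivity) (by positivity)
        _ = 16 * ((N₀:ℝ) ^ (-(1:ℝ)/2) * (P₀:ℝ) ^ (-(1:ℝ)/2)) * ε⁻¹ ^ 2 := by ring
    have hcard : ((idxSet L).card : ℝ) ≤ ((L:ℝ) + 1) ^ 2 := by
      have h1 : (idxSet L).card ≤ (L+1) * (L+1) := by
        calc (idxSet L).card ≤ ((Finset.range (L+1) ×ˢ Finset.range (L+1))).card :=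
              Finset.card_filter_le _ _
          _ = (L+1) * (L+1) := by rw [Finset.card_product, Finset.card_range]
      calc ((idxSet L).card : ℝ) ≤ (((L+1) * (L+1) : ℕ) : ℝ) := by exact_mod_cast h1
        _ = ((L:ℝ) + 1) ^ 2 := by push_cast; ring
    have hsum2 : ∑ ℓ ∈ idxSet L, (N₀:ℝ) * (P₀:ℝ) * (2:ℝ) ^ (L:ℕ)
        ≤ 10800 * ((N₀:ℝ) * (P₀:ℝ)) * ε⁻¹ ^ 2 := by
      rw [Finset.sum_const, nsmul_eq_mul]
      have hb : (0:ℝ) ≤ (N₀:ℝ) * (P₀:ℝ) * (2:ℝ) ^ (L:ℕ) := by positivity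
      calc ((idxSet L).card : ℝ) * ((N₀:ℝ) * (P₀:ℝ) * (2:ℝ) ^ (L:ℕ))
          ≤ ((L:ℝ) + 1) ^ 2 * ((N₀:ℝ) * (P₀:ℝ) * (2:ℝ) ^ (L:ℕ)) :=
            mul_le_mul_of_nonneg_right hcard hb
        _ ≤ (5 * lam) ^ 2 * ((N₀:ℝ) * (P₀:ℝ) * (2 * ε⁻¹ * lam)) := by
            refine mul_le_mul (by nlinarith [hL5]) ?_ hb (by positivity)
            exact mul_le_mul_of_nonneg_left h2L (by positivity)
        _ = 50 * ((N₀:ℝ) * (P₀:ℝ)) * ε⁻¹ * lam ^ 3 := by ring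
        _ ≤ 50 * ((N₀:ℝ) * (P₀:ℝ)) * ε⁻¹ * (216 * ε⁻¹) := by
            exact mul_le_mul_of_nonneg_left hlam3 (by positivity)
        _ = 10800 * ((N₀:ℝ) * (P₀:ℝ)) * ε⁻¹ ^ 2 := by ring
    calc totalCost N₀ P₀ L₀ ε
        ≤ ∑ ℓ ∈ idxSet L,
            (ε⁻¹ ^ 2 * (((N₀:ℝ) ^ (-(1:ℝ)/2) * s ^ ℓ.1) * ((P₀:ℝ) ^ (-(1:ℝ)/2) * s ^ ℓ.2))
              + (N₀:ℝ) * (P₀:ℝ) * (2:ℝ) ^ (L:ℕ)) := by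
          rw [totalCost, ← hLdef]
          exact Finset.sum_le_sum hterm
      _ = (∑ ℓ ∈ idxSet L,
            ε⁻¹ ^ 2 * (((N₀:ℝ) ^ (-(1:ℝ)/2) * s ^ ℓ.1) * ((P₀:ℝ) ^ (-(1:ℝ)/2) * s ^ ℓ.2)))
          + ∑ ℓ ∈ idxSet L, (N₀:ℝ) * (P₀:ℝ) * (2:ℝ) ^ (L:ℕ) := Finset.sum_add_distrib
      _ ≤ 16 * ((N₀:ℝ) ^ (-(1:ℝ)/2) * (P₀:ℝ) ^ (-(1:ℝ)/2)) * ε⁻¹ ^ 2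
          + 10800 * ((N₀:ℝ) * (P₀:ℝ)) * ε⁻¹ ^ 2 := add_le_add hsum1 hsum2
      _ = K * ε⁻¹ ^ 2 := by rw [hKdef]; ring
      _ ≤ max c K * ε⁻¹ ^ 2 := mul_le_mul_of_nonneg_right (le_max_right _ _) hεsq
end

section
/- Let (Ω, F, P) be a probability space, N₀, P₀ ∈ ℕ, N_{ℓ₁} = N₀·2^{ℓ₁}, P_{ℓ₂} = P₀·2^{ℓ₂} for ℓ = (ℓ₁,ℓ₂) ∈ ℕ₀². Let {Δ_{ℓ,m}} be mutually independent real-valued random variables, identically distributed in m for each fixed ℓ, with Var[Δ_{ℓ,1}] ≤ c₂ N_{ℓ₁}^{-2} P_{ℓ₂}^{-2} for some c₂ > 0 and all ℓ. For ε ∈ (0,1), L ∈ ℕ, I = {ℓ ∈ ℕ₀² : ℓ₁ + ℓ₂ ≤ L} and M_ℓ = ⌈ε⁻² N_{ℓ₁}^{-3/2} P_{ℓ₂}^{-3/2}⌉, the estimator μ^{MI} = Σ_{ℓ ∈ I} M_ℓ⁻¹ Σ_{m=1}^{M_ℓ} Δ_{ℓ,m} satisfies Var[μ^{MI}] = Σ_{ℓ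 ∈ I} M_ℓ⁻¹ Var[Δ_{ℓ,1}] ≤ C ε², where C > 0 depends only on c₂, N₀, P₀ (and not on ε or L). -/
open MeasureTheory ProbabilityTheory

universe u

lemma pow_rpow_comm' (a : ℕ) (y : ℝ) : ((2:ℝ) ^ a) ^ y = ((2:ℝ) ^ y) ^ a := by
  rw [← Real.rpow_natCast (2:ℝ) a, ← Real.rpow_mul (by norm_num), mul_comm,
    Real.rpow_mul (by norm_num), Real.rpow_natCast]

lemma key_rpow (x : ℝ) (hx : 0 < x) : x ^ ((3:ℝ)/2) * (x⁻¹)^2 = x ^ (-(1:ℝ)/2) := by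
  have h2 : (x⁻¹)^2 = x ^ (-(2:ℝ)) := by
    rw [Real.rpow_neg hx.le, show ((2:ℝ)) = ((2:ℕ):ℝ) by norm_num, Real.rpow_natCast, inv_pow]
  rw [h2, ← Real.rpow_add hx]; norm_num

lemma geom_bound' (L : ℕ) :
    ∑ k ∈ Finset.range (L+1), ((2:ℝ)^(-(1:ℝ)/2)) ^ k ≤ (1 - (2:ℝ)^(-(1:ℝ)/2))⁻¹ := by
  have hr0 : (0:ℝ) ≤ (2:ℝ)^(-(1:ℝ)/2) := (Real.rpow_pos_of_pos two_pos _).le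
  have hr1 : (2:ℝ)^(-(1:ℝ)/2) < 1 := Real.rpow_lt_one_of_one_lt_of_neg one_lt_two (by norm_num)
  rw [← tsum_geometric_of_lt_one hr0 hr1]
  exact Summable.sum_le_tsum _ (fun i _ => by positivity) (summable_geometric_of_lt_one hr0 hr1)

/-- Statistical-error (variance) bound in the proof of the MIEnKF complexity theorem:
the variance of the multi-index estimator equals the level-wise sum
`Σ_{ℓ ∈ I} M_ℓ⁻¹ Var[Δ_{ℓ,1}]`, which is bounded by `C ε²` with `C` depending only on
`c₂`, `N₀`, `P₀` (and not on `ε` or `L`). -/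
theorem mienkf_variance_bound (N₀ P₀ : ℕ) (hN₀ : 0 < N₀) (hP₀ : 0 < P₀)
    (c₂ : ℝ) (hc₂ : 0 < c₂) :
    ∃ C > (0 : ℝ),
      ∀ (Ω : Type u) (_ : MeasurableSpace Ω) (P : Measure Ω), IsProbabilityMeasure P →
        ∀ (Δ : (ℕ × ℕ) × ℕ → Ω → ℝ),
          (∀ i, MemLp (Δ i) 2 P) →
          iIndepFun Δ P →
          (∀ (ℓ : ℕ × ℕ) (m : ℕ), IdentDistrib (Δ (ℓ, m)) (Δ (ℓ, 1)) P P) →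
          (∀ ℓ : ℕ × ℕ,
            variance (Δ (ℓ, 1)) P ≤ c₂ * ((resN N₀ ℓ.1)⁻¹) ^ 2 * ((resP P₀ ℓ.2)⁻¹) ^ 2) →
          ∀ ε : ℝ, 0 < ε → ε < 1 → ∀ L : ℕ,
            variance
              (fun ω => ∑ ℓ ∈ idxSet L,
                (numSamples N₀ P₀ ε ℓ : ℝ)⁻¹ *
                  ∑ m ∈ Finset.Icc 1 (numSamples N₀ P₀ ε ℓ), Δ (ℓ, m) ω) P
              = ∑ ℓ ∈ idxSet L, (numSamples N₀ P₀ ε ℓ : ℝ)⁻¹ * variance (Δ (ℓ, 1)) P ∧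
            ∑ ℓ ∈ idxSet L, (numSamples N₀ P₀ ε ℓ : ℝ)⁻¹ * variance (Δ (ℓ, 1)) P
              ≤ C * ε ^ 2 := by
  classical
  set r : ℝ := (2:ℝ) ^ (-(1:ℝ)/2) with hr_def
  have hr0 : (0:ℝ) < r := Real.rpow_pos_of_pos two_pos _
  have hr1 : r < 1 := Real.rpow_lt_one_of_one_lt_of_neg one_lt_two (by norm_num)
  have hN₀R : (0:ℝ) < (N₀:ℝ) := by exact_mod_cast hN₀
  have hP₀R : (0:ℝ) < (P₀:ℝ) := by exact_mod_cast hP₀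
  have h1r : (0:ℝ) < 1 - r := by linarith
  have hN2 : (0:ℝ) < (N₀:ℝ)^(-(1:ℝ)/2) := Real.rpow_pos_of_pos hN₀R _
  have hP2 : (0:ℝ) < (P₀:ℝ)^(-(1:ℝ)/2) := Real.rpow_pos_of_pos hP₀R _
  refine ⟨c₂ * (N₀:ℝ)^(-(1:ℝ)/2) * (P₀:ℝ)^(-(1:ℝ)/2) * ((1 - r)⁻¹)^2, by positivity, ?_⟩
  intro Ω mΩ P hP Δ hMem hInd hId hVar ε hε hε1 L
  have hresN : ∀ a : ℕ, (0:ℝ) < resN N₀ a := fun a => by unfold resN; positivity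
  have hresP : ∀ a : ℕ, (0:ℝ) < resP P₀ a := fun a => by unfold resP; positivity
  have hA : ∀ ℓ : ℕ × ℕ,
      (0:ℝ) < ε⁻¹ ^ 2 * resN N₀ ℓ.1 ^ (-(3 : ℝ) / 2) * resP P₀ ℓ.2 ^ (-(3 : ℝ) / 2) := by
    intro ℓ
    have h1 := hresN ℓ.1; have h2 := hresP ℓ.2
    positivity
  set M : ℕ × ℕ → ℕ := fun ℓ => numSamples N₀ P₀ ε ℓ with hM_def
  have hMpos : ∀ ℓ, 0 < M ℓ := fun ℓ => Nat.ceil_pos.mpr (hA ℓ)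
  set c : ℕ × ℕ → ℝ := fun ℓ => ((M ℓ : ℝ))⁻¹ with hc_def
  set v : ℕ × ℕ → ℝ := fun ℓ => variance (Δ (ℓ, 1)) P with hv_def
  -- Part 1 : variance identity
  have part1 :
      variance (fun ω => ∑ ℓ ∈ idxSet L,
          c ℓ * ∑ m ∈ Finset.Icc 1 (M ℓ), Δ (ℓ, m) ω) P
        = ∑ ℓ ∈ idxSet L, c ℓ * v ℓ := by
    set S : Finset ((_ : ℕ × ℕ) × ℕ) := (idxSet L).sigma fun ℓ => Finset.Icc 1 (M ℓ) with hS
    set X : (_ : ℕ × ℕ) × ℕ → Ω → ℝ := fun p ω => c p.1 * Δ (p.1, p.2) ω with hX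
    have hfun : (fun ω => ∑ ℓ ∈ idxSet L, c ℓ * ∑ m ∈ Finset.Icc 1 (M ℓ), Δ (ℓ, m) ω)
        = ∑ p ∈ S, X p := by
      funext ω
      rw [Finset.sum_apply, Finset.sum_sigma]
      exact Finset.sum_congr rfl fun ℓ _ => by rw [Finset.mul_sum]
    have hmem : ∀ p ∈ S, MemLp (X p) 2 P := fun p _ => (hMem (p.1, p.2)).const_mul _
    have hpair : Set.Pairwise (↑S) fun p q => IndepFun (X p) (X q) P := by
      intro p _ q _ hpq
      have hne : (p.1, p.2) ≠ (q.1, q.2) := by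
        intro h
        obtain ⟨a, b⟩ := p; obtain ⟨a', b'⟩ := q
        simp only [Prod.mk.injEq] at h
        exact hpq (by simp [h.1, h.2])
      exact (hInd.indepFun hne).comp (measurable_const_mul (c p.1))
        (measurable_const_mul (c q.1))
    rw [hfun, IndepFun.variance_sum hmem hpair]
    have hvarX : ∀ p : (_ : ℕ × ℕ) × ℕ, variance (X p) P = c p.1 ^ 2 * v p.1 := by
      intro p
      rw [show X p = fun ω => c p.1 * Δ (p.1, p.2) ω from rfl, variance_const_mul,
        (hId p.1 p.2).variance_eq]
    calc ∑ p ∈ S, variance (X p) P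
        = ∑ ℓ ∈ idxSet L, ∑ m ∈ Finset.Icc 1 (M ℓ), c ℓ ^ 2 * v ℓ := by
          rw [Finset.sum_sigma]
          exact Finset.sum_congr rfl fun ℓ _ => Finset.sum_congr rfl fun m _ => hvarX _
      _ = ∑ ℓ ∈ idxSet L, c ℓ * v ℓ := by
          refine Finset.sum_congr rfl fun ℓ _ => ?_
          rw [Finset.sum_const, Nat.card_Icc]
          have hMne : ((M ℓ : ℝ)) ≠ 0 := by exact_mod_cast (hMpos ℓ).ne'
          simp only [Nat.add_sub_cancel, nsmul_eq_mul, hc_def]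
          field_simp
  refine ⟨part1, ?_⟩
  -- Part 2 : bound
  have hterm : ∀ ℓ ∈ idxSet L,
      c ℓ * v ℓ ≤ (c₂ * ε ^ 2 * (N₀:ℝ)^(-(1:ℝ)/2) * (P₀:ℝ)^(-(1:ℝ)/2)) * (r ^ ℓ.1 * r ^ ℓ.2) := by
    intro ℓ _
    have hresN1 := hresN ℓ.1
    have hresP1 := hresP ℓ.2
    have hcle : c ℓ ≤ ε ^ 2 * resN N₀ ℓ.1 ^ ((3:ℝ)/2) * resP P₀ ℓ.2 ^ ((3:ℝ)/2) := by
      have h1 : (ε⁻¹ ^ 2 * resN N₀ ℓ.1 ^ (-(3 : ℝ) / 2) * resP P₀ ℓ.2 ^ (-(3 : ℝ) / 2))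
          ≤ (M ℓ : ℝ) := Nat.le_ceil _
      have h2 : c ℓ ≤ (ε⁻¹ ^ 2 * resN N₀ ℓ.1 ^ (-(3 : ℝ) / 2)
          * resP P₀ ℓ.2 ^ (-(3 : ℝ) / 2))⁻¹ := inv_anti₀ (hA ℓ) h1
      refine h2.trans_eq ?_
      rw [mul_inv, mul_inv, inv_pow, inv_inv,
        show (-(3:ℝ)/2) = -((3:ℝ)/2) by norm_num,
        Real.rpow_neg hresN1.le, Real.rpow_neg hresP1.le, inv_inv, inv_inv]
    have hvb := hVar ℓ
    have hv0 : 0 ≤ v ℓ := variance_nonneg _ _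
    have hc0 : 0 ≤ ε ^ 2 * resN N₀ ℓ.1 ^ ((3:ℝ)/2) * resP P₀ ℓ.2 ^ ((3:ℝ)/2) := by positivity
    calc c ℓ * v ℓ
        ≤ (ε ^ 2 * resN N₀ ℓ.1 ^ ((3:ℝ)/2) * resP P₀ ℓ.2 ^ ((3:ℝ)/2))
            * (c₂ * ((resN N₀ ℓ.1)⁻¹) ^ 2 * ((resP P₀ ℓ.2)⁻¹) ^ 2) :=
          mul_le_mul hcle hvb hv0 hc0
      _ = c₂ * ε ^ 2 * (resN N₀ ℓ.1 ^ ((3:ℝ)/2) * ((resN N₀ ℓ.1)⁻¹) ^ 2)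
            * (resP P₀ ℓ.2 ^ ((3:ℝ)/2) * ((resP P₀ ℓ.2)⁻¹) ^ 2) := by ring
      _ = c₂ * ε ^ 2 * resN N₀ ℓ.1 ^ (-(1:ℝ)/2) * resP P₀ ℓ.2 ^ (-(1:ℝ)/2) := by
          rw [key_rpow _ hresN1, key_rpow _ hresP1]
      _ = (c₂ * ε ^ 2 * (N₀:ℝ)^(-(1:ℝ)/2) * (P₀:ℝ)^(-(1:ℝ)/2)) * (r ^ ℓ.1 * r ^ ℓ.2) := by
          unfold resN resP
          rw [Real.mul_rpow hN₀R.le (by positivity), Real.mul_rpow hP₀R.le (by positivity),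
            pow_rpow_comm', pow_rpow_comm']
          ring
  set K : ℝ := c₂ * ε ^ 2 * (N₀:ℝ)^(-(1:ℝ)/2) * (P₀:ℝ)^(-(1:ℝ)/2) with hK
  have hK0 : 0 ≤ K := by positivity
  calc ∑ ℓ ∈ idxSet L, c ℓ * v ℓ
      ≤ ∑ ℓ ∈ idxSet L, K * (r ^ ℓ.1 * r ^ ℓ.2) := Finset.sum_le_sum hterm
    _ ≤ ∑ ℓ ∈ Finset.range (L + 1) ×ˢ Finset.range (L + 1), K * (r ^ ℓ.1 * r ^ ℓ.2) := by
        refine Finset.sum_le_sum_of_subset_of_nonneg (Finset.filter_subset _ _) ?_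
        intro ℓ _ _; positivity
    _ = K * ((∑ k ∈ Finset.range (L + 1), r ^ k) * (∑ k ∈ Finset.range (L + 1), r ^ k)) := by
        rw [Finset.sum_product]
        simp only [← Finset.mul_sum, ← Finset.sum_mul]
        try ring
    _ ≤ K * ((1 - r)⁻¹ * (1 - r)⁻¹) := by
        have hg := geom_bound' L
        have hs0 : 0 ≤ ∑ k ∈ Finset.range (L + 1), r ^ k :=
          Finset.sum_nonneg fun k _ => by positivity
        have h10 : 0 ≤ (1 - r)⁻¹ := by
          have : 0 < 1 - r := by linarith
          positivity
        exact mul_le_mul_of_nonneg_left (mul_le_mul hg hg hs0 h10) hK0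
    _ = c₂ * (N₀:ℝ)^(-(1:ℝ)/2) * (P₀:ℝ)^(-(1:ℝ)/2) * ((1 - r)⁻¹)^2 * ε ^ 2 := by
        rw [hK]; ring
end
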